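/- Let F(n) be the n-th Fibonacci number. Then the limit L = lim_{n→∞} F(11^n) exists in ℤ_11, is nonzero, and satisfies 5L^2 + 5L + 1 = 0. -/

import Mathlib

open Filter Topology Polynomial

instance : Fact (Nat.Prime 11) := ⟨by norm_num⟩

lemma dvd_iff_toZMod_eq_zero (x : ℤ_[11]) : (11 : ℤ_[11]) ∣ x ↔ PadicInt.toZMod x = 0 := by
  rw [show (11 : ℤ_[11]) = ((11 : ℕ) : ℤ_[11]) by norm_cast, ← Ideal.mem_span_singleton,
    ← PadicInt.maximalIdeal_eq_span_p, ← PadicInt.ker_toZMod, RingHom.mem_ker]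

lemma exists_phi : ∃ φ : ℤ_[11], φ ^ 2 = φ + 1 ∧ PadicInt.toZMod φ = 8 := by
  have h55 : ‖(55 : ℤ_[11])‖ < 1 := by
    rw [show (55 : ℤ_[11]) = ((55 : ℤ) : ℤ_[11]) by norm_cast, PadicInt.norm_int_lt_one_iff_dvd]
    norm_num
  have h15 : ‖(15 : ℤ_[11])‖ = 1 := by
    refine le_antisymm (PadicInt.norm_le_one _) ?_
    by_contra h
    push_neg at h
    rw [show (15 : ℤ_[11]) = ((15 : ℤ) : ℤ_[11]) by norm_cast,
      PadicInt.norm_int_lt_one_iff_dvd] at h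
    norm_num at h
  have e1 : (X ^ 2 - X - 1 : Polynomial ℤ_[11]).eval 8 = 55 := by
    simp only [eval_sub, eval_pow, eval_X, eval_one, eval_ofNat]
    norm_num
  have e2 : (X ^ 2 - X - 1 : Polynomial ℤ_[11]).derivative.eval 8 = 15 := by
    simp only [derivative_sub, derivative_X_pow, derivative_X, derivative_one, eval_sub,
      eval_mul, eval_pow, eval_X, eval_one, eval_natCast, eval_ofNat, sub_zero]
    norm_num
  obtain ⟨z, hz, hz2, -, -⟩ := hensels_lemma (p := 11) (F := (X ^ 2 - X - 1 : Polynomial ℤ_[11])) (a := 8)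
    (by rw [coe_aeval_eq_eval, e1, e2, h15]; simpa using h55)
  rw [coe_aeval_eq_eval, e2, h15] at hz2
  simp only [coe_aeval_eq_eval, eval_sub, eval_pow, eval_X, eval_one] at hz
  refine ⟨z, by linear_combination hz, ?_⟩
  have : (11 : ℤ_[11]) ∣ z - 8 := (PadicInt.norm_lt_one_iff_dvd _).mp (by exact_mod_cast hz2)
  rw [dvd_iff_toZMod_eq_zero, map_sub] at this
  have h8 : PadicInt.toZMod (8 : ℤ_[11]) = 8 := map_ofNat _ 8
  rw [h8] at this
  linear_combination this

lemma toZMod_pow_pow (x : ℤ_[11]) (n : ℕ) :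
    PadicInt.toZMod (x ^ 11 ^ n) = PadicInt.toZMod x := by
  rw [map_pow, ZMod.pow_card_pow]

lemma step_bound (x : ℤ_[11]) (n : ℕ) :
    ‖x ^ 11 ^ (n + 1) - x ^ 11 ^ n‖ ≤ (1 / 11) * (1 / 11) ^ n := by
  have h0 : ((11 : ℕ) : ℤ_[11]) ∣ x ^ 11 - x := by
    rw [show ((11 : ℕ) : ℤ_[11]) = (11 : ℤ_[11]) by norm_cast, dvd_iff_toZMod_eq_zero, map_sub,
      map_pow, ZMod.pow_card, sub_self]
  have h1 := dvd_sub_pow_of_dvd_sub (R := ℤ_[11]) h0 n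
  rw [← pow_mul, ← pow_succ'] at h1
  have h2 : x ^ 11 ^ (n + 1) - x ^ 11 ^ n ∈
      (Ideal.span {((11 : ℕ) : ℤ_[11]) ^ (n + 1)} : Ideal ℤ_[11]) := by
    rw [Ideal.mem_span_singleton]
    exact_mod_cast h1
  have h3 := (PadicInt.norm_le_pow_iff_mem_span_pow _ (n + 1)).mpr h2
  calc ‖x ^ 11 ^ (n + 1) - x ^ 11 ^ n‖ ≤ ((11 : ℕ) : ℝ) ^ (-(n + 1 : ℕ) : ℤ) := h3
    _ = (1 / 11) * (1 / 11) ^ n := by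
        rw [zpow_neg, zpow_natCast]
        push_cast
        rw [one_div, inv_pow, pow_succ']
        simp [inv_pow]
        ring

lemma exists_lim (x : ℤ_[11]) : ∃ T : ℤ_[11],
    Tendsto (fun n : ℕ => x ^ 11 ^ n) atTop (𝓝 T) := by
  apply cauchySeq_tendsto_of_complete
  apply cauchySeq_of_le_geometric (1 / 11) (1 / 11) (by norm_num)
  intro n
  rw [dist_eq_norm, norm_sub_rev]
  exact step_bound x n

lemma lim_residue {x T : ℤ_[11]} (hT : Tendsto (fun n : ℕ => x ^ 11 ^ n) atTop (𝓝 T)) :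
    PadicInt.toZMod T = PadicInt.toZMod x := by
  have hb : ∀ n : ℕ, ‖x ^ 11 ^ n - x‖ ≤ 1 / 11 := by
    intro n
    have : (11 : ℤ_[11]) ∣ x ^ 11 ^ n - x := by
      rw [dvd_iff_toZMod_eq_zero, map_sub, toZMod_pow_pow, sub_self]
    have h2 : x ^ 11 ^ n - x ∈ (Ideal.span {((11 : ℕ) : ℤ_[11]) ^ 1} : Ideal ℤ_[11]) := by
      rw [Ideal.mem_span_singleton, pow_one]
      exact_mod_cast this
    have h3 := (PadicInt.norm_le_pow_iff_mem_span_pow _ 1).mpr h2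
    calc ‖x ^ 11 ^ n - x‖ ≤ ((11 : ℕ) : ℝ) ^ (-(1 : ℕ) : ℤ) := h3
      _ = 1 / 11 := by norm_num
  have hlim : Tendsto (fun n : ℕ => ‖x ^ 11 ^ n - x‖) atTop (𝓝 ‖T - x‖) :=
    (hT.sub tendsto_const_nhds).norm
  have hTx : ‖T - x‖ ≤ 1 / 11 := le_of_tendsto hlim (Eventually.of_forall hb)
  have hdvd : ((11 : ℕ) : ℤ_[11]) ∣ T - x := (PadicInt.norm_lt_one_iff_dvd _).mp (by linarith)
  have : (11 : ℤ_[11]) ∣ T - x := by exact_mod_cast hdvd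
  rw [dvd_iff_toZMod_eq_zero, map_sub, sub_eq_zero] at this
  exact this

/-- The limit `L = lim_{n→∞} F(11^n)` exists in `ℤ_11`, is nonzero, and satisfies
`5L² + 5L + 1 = 0`. -/
theorem stmt_11 :
    ∃ L : ℤ_[11], Tendsto (fun n : ℕ => ((Nat.fib (11 ^ n) : ℕ) : ℤ_[11])) atTop (𝓝 L) ∧
      L ≠ 0 ∧ 5 * L ^ 2 + 5 * L + 1 = 0 := by
  obtain ⟨φ, hφ2, rφ⟩ := exists_phi
  obtain ⟨ψ, hψdef⟩ : ∃ ψ : ℤ_[11], ψ = 1 - φ := ⟨_, rfl⟩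
  have hψ2 : ψ ^ 2 = ψ + 1 := by rw [hψdef]; ring_nf; linear_combination hφ2
  have hφψ : φ * ψ = -1 := by rw [hψdef]; linear_combination -hφ2
  obtain ⟨s, hsdef⟩ : ∃ s : ℤ_[11], s = 2 * φ - 1 := ⟨_, rfl⟩
  have hs2 : s ^ 2 = 5 := by rw [hsdef]; linear_combination 4 * hφ2
  have rψ : PadicInt.toZMod ψ = 4 := by
    rw [hψdef, map_sub, map_one, rφ]; decide
  have rs : PadicInt.toZMod s = 4 := by
    rw [hsdef, map_sub, map_mul, map_one, map_ofNat, rφ]; decide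
  -- Fibonacci formula
  have fibs : ∀ n : ℕ, ((Nat.fib n : ℕ) : ℤ_[11]) * s = φ ^ n - ψ ^ n := by
    intro n
    induction n using Nat.twoStepInduction with
    | zero => simp
    | one => simp [hsdef, hψdef]; ring
    | more n ih1 ih2 =>
      rw [Nat.fib_add_two]
      push_cast
      rw [add_mul, ih1, ih2]
      linear_combination (-(φ ^ n)) * hφ2 + (ψ ^ n) * hψ2
  obtain ⟨ζ, hζ⟩ := exists_lim φ
  obtain ⟨η, hη⟩ := exists_lim ψ
  have rζ : PadicInt.toZMod ζ = 8 := by rw [lim_residue hζ, rφ]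
  have rη : PadicInt.toZMod η = 4 := by rw [lim_residue hη, rψ]
  -- ζ * η = -1
  have hζη : ζ * η = -1 := by
    have h1 : Tendsto (fun n : ℕ => φ ^ 11 ^ n * ψ ^ 11 ^ n) atTop (𝓝 (ζ * η)) := hζ.mul hη
    have h2 : (fun n : ℕ => φ ^ 11 ^ n * ψ ^ 11 ^ n) = fun _ => -1 := by
      funext n
      rw [← mul_pow, hφψ, Odd.neg_one_pow (Odd.pow (by decide))]
    rw [h2] at h1
    exact tendsto_nhds_unique h1 tendsto_const_nhds
  -- η ^ 11 = η
  have hη11 : η ^ 11 = η := by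
    have h1 : Tendsto (fun n : ℕ => ψ ^ 11 ^ (n + 1)) atTop (𝓝 η) :=
      hη.comp (tendsto_add_atTop_nat 1)
    have h2 : Tendsto (fun n : ℕ => (ψ ^ 11 ^ n) ^ 11) atTop (𝓝 (η ^ 11)) := hη.pow 11
    have h3 : (fun n : ℕ => ψ ^ 11 ^ (n + 1)) = fun n : ℕ => (ψ ^ 11 ^ n) ^ 11 := by
      funext n; rw [← pow_mul, ← pow_succ]
    rw [h3] at h1
    exact (tendsto_nhds_unique h2 h1)
  have hη0 : η ≠ 0 := by
    intro h; rw [h, map_zero] at rη; exact absurd rη (by decide)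
  have hη10 : η ^ 10 = 1 := by
    have : η * (η ^ 10 - 1) = 0 := by linear_combination hη11
    rcases mul_eq_zero.mp this with h | h
    · exact absurd h hη0
    · linear_combination h
  have hη5 : η ^ 5 = 1 := by
    have : (η ^ 5 - 1) * (η ^ 5 + 1) = 0 := by linear_combination hη10
    rcases mul_eq_zero.mp this with h | h
    · linear_combination h
    · exfalso
      have : PadicInt.toZMod (η ^ 5) = PadicInt.toZMod (-1) := by
        rw [show η ^ 5 = -1 by linear_combination h]
      rw [map_pow, rη, map_neg, map_one] at this
      exact absurd this (by decide)
  have hη1 : η - 1 ≠ 0 := by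
    intro h
    have : PadicInt.toZMod (η - 1) = 0 := by rw [h, map_zero]
    rw [map_sub, map_one, rη] at this
    exact absurd this (by decide)
  have H4 : η ^ 4 + η ^ 3 + η ^ 2 + η + 1 = 0 := by
    have : (η - 1) * (η ^ 4 + η ^ 3 + η ^ 2 + η + 1) = 0 := by linear_combination hη5
    rcases mul_eq_zero.mp this with h | h
    · exact absurd h hη1
    · exact h
  obtain ⟨c, hcdef⟩ : ∃ c : ℤ_[11], c = η - ζ := ⟨_, rfl⟩
  have hc : c ^ 2 + c - 1 = 0 := by
    have key : η ^ 2 * (c ^ 2 + c - 1) = 0 := by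
      rw [hcdef]
      linear_combination H4 + (ζ * η - 2 * η ^ 2 - η - 1) * hζη
    rcases mul_eq_zero.mp key with h | h
    · exact absurd h (pow_ne_zero 2 hη0)
    · exact h
  have rc : PadicInt.toZMod c = 7 := by
    rw [hcdef, map_sub, rη, rζ]; decide
  have hsc : s * c = 2 - c := by
    have key : (s * c - (2 - c)) * (s * c + (2 - c)) = 0 := by
      linear_combination c ^ 2 * hs2 + 4 * hc
    rcases mul_eq_zero.mp key with h | h
    · linear_combination h
    · exfalso
      have h' : s * c = -(2 - c) := by linear_combination h
      have : PadicInt.toZMod (s * c) = PadicInt.toZMod (-(2 - c)) := by rw [h']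
      have h2 : PadicInt.toZMod (2 : ℤ_[11]) = 2 := map_ofNat _ 2
      rw [map_mul, map_neg, map_sub, h2, rs, rc] at this
      exact absurd this (by decide)
  -- s is a unit
  have hsu : IsUnit s := by
    rw [PadicInt.isUnit_iff]
    refine le_antisymm (PadicInt.norm_le_one _) ?_
    by_contra h
    push_neg at h
    rw [PadicInt.norm_lt_one_iff_dvd] at h
    have h' : (11 : ℤ_[11]) ∣ s := by exact_mod_cast h
    rw [dvd_iff_toZMod_eq_zero, rs] at h'
    exact absurd h' (by decide)
  obtain ⟨u, hu⟩ := hsu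
  obtain ⟨L, hLdef⟩ : ∃ L : ℤ_[11], L = (ζ - η) * ↑u⁻¹ := ⟨_, rfl⟩
  have hsL : s * L = ζ - η := by
    rw [hLdef, ← hu]
    calc (u : ℤ_[11]) * ((ζ - η) * ↑u⁻¹) = (ζ - η) * (↑u⁻¹ * ↑u) := by ring
      _ = ζ - η := by rw [Units.inv_mul, mul_one]
  refine ⟨L, ?_, ?_, ?_⟩
  · have h1 : Tendsto (fun n : ℕ => (φ ^ 11 ^ n - ψ ^ 11 ^ n) * ↑u⁻¹) atTop (𝓝 L) := by
      rw [hLdef]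
      exact (hζ.sub hη).mul_const _
    refine h1.congr ?_
    intro n
    have := fibs (11 ^ n)
    calc (φ ^ 11 ^ n - ψ ^ 11 ^ n) * ↑u⁻¹ = ((Nat.fib (11 ^ n) : ℕ) : ℤ_[11]) * s * ↑u⁻¹ := by
          rw [this]
      _ = ((Nat.fib (11 ^ n) : ℕ) : ℤ_[11]) * (↑u * ↑u⁻¹) := by rw [hu]; ring
      _ = _ := by rw [Units.mul_inv, mul_one]
  · intro h
    rw [h, mul_zero] at hsL
    have : PadicInt.toZMod ζ = PadicInt.toZMod η := by
      rw [sub_eq_zero.mp hsL.symm]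
    rw [rζ, rη] at this
    exact absurd this (by decide)
  · have hsLc : s * L = -c := by rw [hsL, hcdef]; ring
    linear_combination (-(L ^ 2) - L) * hs2 + (s * L - c + s) * hsLc - hsc + hc
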